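/- Let E be a finite set, let {A_i}_{i∈E} be pairwise commuting real d×d matrices, and let (π_i)_{i∈E} be nonnegative reals with Σ_{i∈E} π_i = 1 such that the average matrix Ā = Σ_{i∈E} π_i A_i is Hurwitz. Let I : [0,∞) → E be a measurable switching signal such that for each i ∈ E the occupation fraction (1/t)∫_0^t 1_{I_s=i} ds converges to π_i as t → ∞. Then for every x_0 ∈ ℝ^d, the solution X_t = exp( Σ_{i∈E} (∫_0^t 1_{I_s=i} ds) A_i ) x_0 of the switched linear ODE Ẋ_t = A_{I_t} X_t satisfies ‖X_t‖ → 0 as t → ∞. -/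

import Mathlib

open MeasureTheory ProbabilityTheory Matrix Filter Set
open scoped RealInnerProductSpace

noncomputable section

/-- A real square matrix is Hurwitz if every eigenvalue of its complexification
has strictly negative real part. -/
def IsHurwitz {n : Type*} [Fintype n] [DecidableEq n] (A : Matrix n n ℝ) : Prop :=
  ∀ μ ∈ spectrum ℂ (A.map (Complex.ofReal : ℝ → ℂ)), μ.re < 0

/-- The operator norm of a real matrix induced by the Euclidean norm on `ℝ^d`. -/
def eopNorm {d : ℕ} (A : Matrix (Fin d) (Fin d) ℝ) : ℝ :=
  ‖Matrix.toEuclideanCLM (𝕜 := ℝ) A‖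

/-- A matrix acting on Euclidean space. -/
def applyM {d : ℕ} (A : Matrix (Fin d) (Fin d) ℝ) (x : EuclideanSpace ℝ (Fin d)) :
    EuclideanSpace ℝ (Fin d) :=
  Matrix.toEuclideanCLM (𝕜 := ℝ) A x

section auxiliary

open Nat Module
open scoped Matrix.Norms.L2Operator ENNReal NNReal Topology

variable {d : ℕ}

theorem my_norm_exp_le {𝔸 : Type*} [NormedRing 𝔸] [NormedAlgebra ℂ 𝔸] [CompleteSpace 𝔸]
    (h1 : ‖(1 : 𝔸)‖ ≤ 1) (x : 𝔸) : ‖NormedSpace.exp x‖ ≤ Real.exp ‖x‖ := by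
  rw [NormedSpace.exp_eq_tsum ℂ]
  refine (norm_tsum_le_tsum_norm (NormedSpace.norm_expSeries_summable' x)).trans ?_
  rw [Real.exp_eq_exp_ℝ, NormedSpace.exp_eq_tsum ℝ]
  have hsum : Summable fun n : ℕ => (n !⁻¹ : ℝ) • ‖x‖ ^ n := NormedSpace.expSeries_summable' ‖x‖
  refine (Summable.tsum_le_tsum ?_ (NormedSpace.norm_expSeries_summable' x) hsum)
  intro n
  rw [norm_smul, smul_eq_mul, norm_inv]
  have h1' : ‖x ^ n‖ ≤ ‖x‖ ^ n := by
    rcases Nat.eq_zero_or_pos n with h | h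
    · simpa [h] using h1
    · exact norm_pow_le' x h
  have : ‖((n ! : ℂ))‖ = (n ! : ℝ) := by
    rw [Complex.norm_natCast]
  rw [this]
  have hfac : (0:ℝ) ≤ (n ! : ℝ)⁻¹ := by positivity
  exact mul_le_mul_of_nonneg_left h1' hfac

theorem matrix_norm_one_le : ‖(1 : Matrix (Fin d) (Fin d) ℂ)‖ ≤ 1 := by
  rw [Matrix.cstar_norm_def, _root_.map_one]; exact ContinuousLinearMap.norm_id_le

theorem exp_mulVec_eigen (M : Matrix (Fin d) (Fin d) ℂ) (w : Fin d → ℂ) (lam : ℂ)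
    (hw : M *ᵥ w = lam • w) :
    NormedSpace.exp M *ᵥ w = Complex.exp lam • w := by
  have hpow : ∀ n : ℕ, (M ^ n) *ᵥ w = (lam ^ n) • w := by
    intro n
    induction n with
    | zero => simp
    | succ n ih =>
      rw [pow_succ, ← Matrix.mulVec_mulVec, hw, Matrix.mulVec_smul, ih, smul_smul]
      congr 1
      ring
  -- linear map N ↦ N *ᵥ w
  let L : Matrix (Fin d) (Fin d) ℂ →ₗ[ℂ] (Fin d → ℂ) :=
    { toFun := fun N => N *ᵥ w
      map_add' := fun N₁ N₂ => Matrix.add_mulVec N₁ N₂ w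
      map_smul' := fun c N => Matrix.smul_mulVec c N w }
  let Lc : Matrix (Fin d) (Fin d) ℂ →L[ℂ] (Fin d → ℂ) :=
    { L with cont := L.continuous_of_finiteDimensional }
  have hLc : ∀ N, Lc N = N *ᵥ w := fun _ => rfl
  have hsum : Summable fun n : ℕ => (n !⁻¹ : ℂ) • M ^ n := NormedSpace.expSeries_summable' M
  calc NormedSpace.exp M *ᵥ w = Lc (∑' n : ℕ, (n !⁻¹ : ℂ) • M ^ n) := by
        show Lc (NormedSpace.exp M) = _
        rw [NormedSpace.exp_eq_tsum ℂ]
      _ = ∑' n : ℕ, Lc ((n !⁻¹ : ℂ) • M ^ n) := Lc.map_tsum hsum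
      _ = ∑' n : ℕ, ((n !⁻¹ : ℂ) * lam ^ n) • w := by
        refine tsum_congr fun n => ?_
        rw [hLc, Matrix.smul_mulVec, hpow, smul_smul]
      _ = (∑' n : ℕ, ((n !⁻¹ : ℂ) * lam ^ n)) • w := by
        refine Summable.tsum_smul_const ?_ w
        simpa [smul_eq_mul] using NormedSpace.expSeries_summable' (𝕂 := ℂ) lam
      _ = Complex.exp lam • w := by
        congr 1
        rw [Complex.exp_eq_exp_ℂ, NormedSpace.exp_eq_tsum ℂ]
        exact tsum_congr fun n => by rw [smul_eq_mul]

theorem spectrum_exp_subset (M : Matrix (Fin d) (Fin d) ℂ) :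
    ∀ μ ∈ spectrum ℂ (NormedSpace.exp M), ∃ lam ∈ spectrum ℂ M, Complex.exp lam = μ := by
  intro μ hμ
  set Q := NormedSpace.exp M with hQ
  -- commute
  have hMQ : Commute M Q := (Commute.refl M).exp_right
  -- transfer to End
  let e := Matrix.toLinAlgEquiv' (R := ℂ) (n := Fin d)
  have hspecQ : μ ∈ spectrum ℂ (e Q) := by rwa [AlgEquiv.spectrum_eq]
  have hEig : Module.End.HasEigenvalue (e Q) μ :=
    Module.End.hasEigenvalue_iff_mem_spectrum.mpr hspecQ
  set S := Module.End.eigenspace (e Q) μ with hS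
  haveI : Nontrivial S := Submodule.nontrivial_iff_ne_bot.mpr hEig
  have hmaps : ∀ x ∈ S, (e M) x ∈ S := by
    intro x hx
    rw [Module.End.mem_eigenspace_iff] at hx ⊢
    have hcomm' : (e Q) * (e M) = (e M) * (e Q) := by
      rw [← _root_.map_mul, ← _root_.map_mul, hMQ.eq]
    have : (e Q) ((e M) x) = (e M) ((e Q) x) := by
      have := congrArg (fun g => g x) hcomm'
      simpa [Module.End.mul_apply] using this
    rw [this, hx, _root_.map_smul]
  let f : Module.End ℂ S := (e M).restrict hmaps
  obtain ⟨lam, hlam⟩ := Module.End.exists_eigenvalue f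
  obtain ⟨w', hw'⟩ := hlam.exists_hasEigenvector
  have hwS : (w' : Fin d → ℂ) ∈ S := w'.2
  have hw0 : (w' : Fin d → ℂ) ≠ 0 := fun h => hw'.2 (by ext; exact congrFun h _ )
  have hfw : (e M) (w' : Fin d → ℂ) = lam • (w' : Fin d → ℂ) := by
    have := hw'.apply_eq_smul
    have h2 := congrArg (Subtype.val) this
    simpa [f, LinearMap.restrict_apply] using h2
  -- mulVec forms
  have hMv : M *ᵥ (w' : Fin d → ℂ) = lam • (w' : Fin d → ℂ) := by
    simpa [e, Matrix.toLinAlgEquiv'_apply, Matrix.toLin'_apply] using hfw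
  have hQv : Q *ᵥ (w' : Fin d → ℂ) = μ • (w' : Fin d → ℂ) := by
    have := Module.End.mem_eigenspace_iff.mp hwS
    simpa [e, Matrix.toLinAlgEquiv'_apply, Matrix.toLin'_apply] using this
  have hexp : Q *ᵥ (w' : Fin d → ℂ) = Complex.exp lam • (w' : Fin d → ℂ) :=
    exp_mulVec_eigen M _ lam hMv
  refine ⟨lam, ?_, ?_⟩
  · rw [← AlgEquiv.spectrum_eq e, ← Module.End.hasEigenvalue_iff_mem_spectrum]
    exact Module.End.hasEigenvalue_of_hasEigenvector
      ⟨Module.End.mem_eigenspace_iff.mpr hfw, hw0⟩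
  · have : Complex.exp lam • (w' : Fin d → ℂ) = μ • (w' : Fin d → ℂ) := by rw [← hexp, hQv]
    have hdiff : (Complex.exp lam - μ) • (w' : Fin d → ℂ) = 0 := by
      rw [sub_smul, this, sub_self]
    rcases smul_eq_zero.mp hdiff with h | h
    · exact sub_eq_zero.mp h
    · exact absurd h hw0

theorem hurwitz_decay (hd : 0 < d) (B : Matrix (Fin d) (Fin d) ℝ) (hB : IsHurwitz B) :
    ∃ β C : ℝ, 0 < β ∧ 0 < C ∧ ∀ t : ℝ, 0 ≤ t →
      ‖NormedSpace.exp ((t : ℂ) • B.map (Complex.ofReal : ℝ → ℂ))‖ ≤ C * Real.exp (-β * t) := by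
  set Bc := B.map (Complex.ofReal : ℝ → ℂ) with hBc
  set Q := NormedSpace.exp Bc with hQdef
  haveI : Nonempty (Fin d) := ⟨⟨0, hd⟩⟩
  haveI : Nontrivial (Matrix (Fin d) (Fin d) ℂ) := by
    have : (0 : Matrix (Fin d) (Fin d) ℂ) ≠ 1 := fun h => by
      have := congrFun (congrFun h ⟨0, hd⟩) ⟨0, hd⟩
      simp [Matrix.one_apply] at this
    exact ⟨⟨0, 1, this⟩⟩
  -- all spectrum points of Q have nnnorm < 1
  have hspec : ∀ μ ∈ spectrum ℂ Q, ‖μ‖₊ < 1 := by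
    intro μ hμ
    obtain ⟨lam, hlam, rfl⟩ := spectrum_exp_subset Bc μ hμ
    have : ‖Complex.exp lam‖ = Real.exp lam.re := Complex.norm_exp lam
    have h1 : ‖Complex.exp lam‖ < 1 := by
      rw [this]
      exact Real.exp_lt_one_iff.mpr (hB lam hlam)
    exact_mod_cast h1
  have hrad : spectralRadius ℂ Q < 1 := by
    have := spectrum.spectralRadius_lt_of_forall_lt Q hspec
    simpa using this
  obtain ⟨ρ, hρ1, hρ2⟩ := exists_between hrad
  -- ρ : ℝ≥0∞ with spectralRadius < ρ < 1 ; make it an nnreal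
  lift ρ to ℝ≥0 using (hρ2.trans (by norm_num)).ne
  have hρpos : (0:ℝ≥0) < ρ := by
    have h0 : (0:ℝ≥0∞) ≤ spectralRadius ℂ Q := _root_.zero_le
    exact_mod_cast h0.trans_lt hρ1
  have hρlt1 : (ρ:ℝ) < 1 := by exact_mod_cast hρ2
  set r : ℝ := (ρ:ℝ) with hrdef
  have hr0 : 0 < r := hρpos
  have hr1 : r < 1 := hρlt1
  have hgel := spectrum.pow_nnnorm_pow_one_div_tendsto_nhds_spectralRadius Q
  have hev : ∀ᶠ n : ℕ in atTop, (‖Q ^ n‖₊ : ℝ≥0∞) ^ (1/(n:ℝ)) < (ρ : ℝ≥0∞) :=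
    hgel.eventually_lt_const hρ1
  obtain ⟨N, hN⟩ := eventually_atTop.mp hev
  -- pointwise power bound
  have hb : ∀ n : ℕ, 1 ≤ n → n ≥ N → ‖Q ^ n‖ ≤ r ^ n := by
    intro n h1n hNn
    have h := hN n hNn
    have hne : ((n:ℝ)) ≠ 0 := by positivity
    have h2 := ENNReal.rpow_le_rpow h.le (by positivity : (0:ℝ) ≤ (n:ℝ))
    rw [← ENNReal.rpow_mul, one_div, inv_mul_cancel₀ hne, ENNReal.rpow_one,
      ENNReal.rpow_natCast] at h2
    have h3 : ‖Q ^ n‖₊ ≤ ρ ^ n := by exact_mod_cast h2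
    calc ‖Q ^ n‖ = ((‖Q ^ n‖₊ : ℝ≥0) : ℝ) := (coe_nnnorm _).symm
      _ ≤ ((ρ ^ n : ℝ≥0) : ℝ) := by exact_mod_cast h3
      _ = r ^ n := by push_cast; rfl
  set N' := max N 1 with hN'
  set C₂ : ℝ := 1 + ∑ n ∈ Finset.range N', ‖Q ^ n‖ / r ^ n with hC₂
  have hsum_nonneg : (0:ℝ) ≤ ∑ n ∈ Finset.range N', ‖Q ^ n‖ / r ^ n :=
    Finset.sum_nonneg fun n _ => by positivity
  have hC₂1 : (1:ℝ) ≤ C₂ := by simp only [hC₂]; linarith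
  have hCall : ∀ n : ℕ, ‖Q ^ n‖ ≤ C₂ * r ^ n := by
    intro n
    rcases lt_or_ge n N' with h | h
    · have hmem : n ∈ Finset.range N' := Finset.mem_range.mpr h
      have hle : ‖Q ^ n‖ / r ^ n ≤ C₂ := by
        have := Finset.single_le_sum (f := fun k => ‖Q ^ k‖ / r ^ k)
          (fun k _ => by positivity) hmem
        simp only [hC₂]; linarith
      have hrn : (0:ℝ) < r ^ n := by positivity
      calc ‖Q ^ n‖ = (‖Q ^ n‖ / r ^ n) * r ^ n := by field_simp
        _ ≤ C₂ * r ^ n := mul_le_mul_of_nonneg_right hle hrn.le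
    · have h1n : 1 ≤ n := le_trans (le_max_right N 1) h
      have hNn : N ≤ n := le_trans (le_max_left N 1) h
      calc ‖Q ^ n‖ ≤ r ^ n := hb n h1n hNn
        _ ≤ C₂ * r ^ n := by nlinarith [pow_pos hr0 n]
  set K : ℝ := Real.exp ‖Bc‖ with hK
  set β : ℝ := -Real.log r with hβ
  have hβpos : 0 < β := by
    simp only [hβ]
    have := Real.log_neg hr0 hr1
    linarith
  refine ⟨β, C₂ * K * Real.exp β, hβpos, by positivity, ?_⟩
  intro t ht
  set n : ℕ := ⌊t⌋₊ with hn
  set u : ℝ := t - n with hu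
  have hu0 : 0 ≤ u := by
    have := Nat.floor_le ht
    simp only [hu]; linarith
  have hu1 : u ≤ 1 := by
    have := (Nat.lt_floor_add_one t).le
    simp only [hu]; linarith
  have hsplit : (t : ℂ) • Bc = ((n:ℝ) : ℂ) • Bc + ((u:ℝ) : ℂ) • Bc := by
    rw [← add_smul]
    congr 1
    simp only [hu]
    push_cast
    ring
  have hcomm : Commute (((n:ℝ) : ℂ) • Bc) (((u:ℝ) : ℂ) • Bc) :=
    ((Commute.refl Bc).smul_left _).smul_right _
  have hexp_split : NormedSpace.exp ((t : ℂ) • Bc) =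
      Q ^ n * NormedSpace.exp (((u:ℝ) : ℂ) • Bc) := by
    rw [hsplit, Matrix.exp_add_of_commute _ _ hcomm]
    congr 1
    have : (((n:ℝ)) : ℂ) • Bc = (n : ℕ) • Bc := by
      push_cast
      rw [Nat.cast_smul_eq_nsmul]
    rw [this, Matrix.exp_nsmul]
  have hKbound : ‖NormedSpace.exp (((u:ℝ) : ℂ) • Bc)‖ ≤ K := by
    refine (my_norm_exp_le matrix_norm_one_le _).trans ?_
    rw [hK]
    apply Real.exp_le_exp.mpr
    rw [norm_smul]
    have : ‖((u:ℝ) : ℂ)‖ = u := by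
      rw [Complex.norm_real, Real.norm_of_nonneg hu0]
    rw [this]
    nlinarith [norm_nonneg Bc]
  have hfinal : ‖NormedSpace.exp ((t : ℂ) • Bc)‖ ≤ C₂ * r ^ n * K := by
    rw [hexp_split]
    calc ‖Q ^ n * NormedSpace.exp (((u:ℝ) : ℂ) • Bc)‖
        ≤ ‖Q ^ n‖ * ‖NormedSpace.exp (((u:ℝ) : ℂ) • Bc)‖ := norm_mul_le _ _
      _ ≤ (C₂ * r ^ n) * K := by
          apply mul_le_mul (hCall n) hKbound (norm_nonneg _)
          positivity
  refine hfinal.trans ?_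
  have hrt : r ^ n ≤ Real.exp (-β * t) * Real.exp β := by
    have h1 : r ^ n = Real.exp (Real.log r * (n:ℝ)) := by
      rw [← Real.rpow_natCast r n, Real.rpow_def_of_pos hr0]
    have h2 : Real.exp (-β * t) * Real.exp β = Real.exp (Real.log r * (t - 1)) := by
      rw [← Real.exp_add]
      congr 1
      simp only [hβ]; ring
    rw [h1, h2]
    apply Real.exp_le_exp.mpr
    have hlog : Real.log r < 0 := Real.log_neg hr0 hr1
    have hfl : t - 1 ≤ (n:ℝ) := by
      have := (Nat.lt_floor_add_one t).le
      simp only [hn]; linarith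
    nlinarith
  calc C₂ * r ^ n * K ≤ C₂ * (Real.exp (-β * t) * Real.exp β) * K := by
        have hC₂0 : (0:ℝ) < C₂ := lt_of_lt_of_le one_pos hC₂1
        have hK0 : (0:ℝ) < K := Real.exp_pos _
        exact mul_le_mul_of_nonneg_right
          (mul_le_mul_of_nonneg_left hrt hC₂0.le) hK0.le
      _ = C₂ * K * Real.exp β * Real.exp (-β * t) := by ring

theorem cmap_exp (M : Matrix (Fin d) (Fin d) ℝ) :
    (NormedSpace.exp M).map (Complex.ofReal : ℝ → ℂ) =
      NormedSpace.exp (M.map (Complex.ofReal : ℝ → ℂ)) := by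
  have hc : Continuous (Complex.ofRealAm.mapMatrix
      (m := Fin d) : Matrix (Fin d) (Fin d) ℝ →ₐ[ℝ] Matrix (Fin d) (Fin d) ℂ) := by
    apply continuous_matrix
    intro i j
    exact Complex.continuous_ofReal.comp (continuous_apply_apply i j)
  letI : NormedAlgebra ℚ (Matrix (Fin d) (Fin d) ℝ) := .restrictScalars ℚ ℝ _
  have h1 := NormedSpace.map_exp
    (Complex.ofRealAm.mapMatrix (m := Fin d) : Matrix (Fin d) (Fin d) ℝ →ₐ[ℝ]
      Matrix (Fin d) (Fin d) ℂ) hc M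
  have h2 : (NormedSpace.exp (M.map (Complex.ofReal : ℝ → ℂ))) =
      NormedSpace.exp (M.map (Complex.ofReal : ℝ → ℂ)) := by
    rfl
  calc (NormedSpace.exp M).map (Complex.ofReal : ℝ → ℂ)
      = Complex.ofRealAm.mapMatrix (NormedSpace.exp M) := rfl
    _ = NormedSpace.exp (Complex.ofRealAm.mapMatrix M) := h1
    _ = NormedSpace.exp (M.map (Complex.ofReal : ℝ → ℂ)) := h2

theorem real_norm_le_cnorm (M : Matrix (Fin d) (Fin d) ℝ) :
    ‖M‖ ≤ ‖M.map (Complex.ofReal : ℝ → ℂ)‖ := by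
  rw [Matrix.cstar_norm_def (𝕜 := ℝ)]
  refine ContinuousLinearMap.opNorm_le_bound _ (norm_nonneg _) fun x => ?_
  set ex : Fin d → ℝ := WithLp.equiv 2 _ x with hex
  set xc : EuclideanSpace ℂ (Fin d) :=
    (WithLp.equiv 2 (Fin d → ℂ)).symm (fun k => ((ex k : ℝ) : ℂ)) with hxc
  have hnorm_xc : ‖xc‖ = ‖x‖ := by
    rw [EuclideanSpace.norm_eq, EuclideanSpace.norm_eq]
    congr 1
    apply Finset.sum_congr rfl
    intro i _
    simp [hxc, hex, WithLp.equiv_symm_apply, WithLp.equiv_apply, Complex.norm_real]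
  have happ : toEuclideanCLM (𝕜 := ℂ) (M.map (Complex.ofReal : ℝ → ℂ)) xc =
      (WithLp.equiv 2 (Fin d → ℂ)).symm (fun i => ((M *ᵥ ex) i : ℂ)) := by
    apply (WithLp.equiv 2 (Fin d → ℂ)).injective
    rw [WithLp.equiv_apply, Matrix.ofLp_toEuclideanCLM]
    funext i
    simp only [hxc, Equiv.apply_symm_apply, WithLp.equiv_symm_apply, WithLp.ofLp_toLp, Matrix.mulVec, dotProduct, Matrix.map_apply]
    push_cast
    rfl
  have hnorm_app : ‖toEuclideanCLM (𝕜 := ℝ) M x‖ =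
      ‖toEuclideanCLM (𝕜 := ℂ) (M.map (Complex.ofReal : ℝ → ℂ)) xc‖ := by
    rw [happ, EuclideanSpace.norm_eq, EuclideanSpace.norm_eq]
    congr 1
    apply Finset.sum_congr rfl
    intro i _
    have h1 : (toEuclideanCLM (𝕜 := ℝ) M x) i = (M *ᵥ ex) i := by
      have := Matrix.ofLp_toEuclideanCLM (𝕜 := ℝ) M x
      have h2 := congrFun this i
      simpa [Matrix.toLin'_apply, WithLp.equiv_apply, hex] using h2
    rw [h1]
    simp [WithLp.equiv_symm_apply, Complex.norm_real]
  rw [hnorm_app, ← hnorm_xc]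
  calc ‖toEuclideanCLM (𝕜 := ℂ) (M.map (Complex.ofReal : ℝ → ℂ)) xc‖
      ≤ ‖toEuclideanCLM (𝕜 := ℂ) (M.map (Complex.ofReal : ℝ → ℂ))‖ * ‖xc‖ :=
        ContinuousLinearMap.le_opNorm _ _
    _ = ‖M.map (Complex.ofReal : ℝ → ℂ)‖ * ‖xc‖ := by rw [← Matrix.cstar_norm_def]

/-- Commuting case: if the `A i` commute, the average matrix is Hurwitz, and the occupation
fractions of the switching signal converge to the weights `π i`, then the switched solution
tends to zero. -/
theorem commuting_case {d : ℕ} {E : Type*} [Fintype E] [DecidableEq E]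
    (A : E → Matrix (Fin d) (Fin d) ℝ) (hcomm : ∀ i j, A i * A j = A j * A i)
    (π : E → ℝ) (hπ : ∀ i, 0 ≤ π i) (hsum : ∑ i, π i = 1)
    (hbar : IsHurwitz (∑ i, π i • A i))
    (I : ℝ → E) (hmeas : ∀ i, MeasurableSet {s : ℝ | I s = i})
    (hocc : ∀ i, Tendsto
      (fun t : ℝ => (1 / t) * ∫ s in Set.Ioc (0 : ℝ) t, (if I s = i then (1 : ℝ) else 0))
      atTop (nhds (π i)))
    (x₀ : EuclideanSpace ℝ (Fin d)) :
    Tendsto (fun t : ℝ => ‖applyM (NormedSpace.exp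
        (∑ i, (∫ s in Set.Ioc (0 : ℝ) t, (if I s = i then (1 : ℝ) else 0)) • A i)) x₀‖)
      atTop (nhds 0) := by
  classical
  rcases Nat.eq_zero_or_pos d with hd | hd
  · subst hd
    have hx : x₀ = 0 := by ext i; exact i.elim0
    have hz : ∀ t : ℝ, ‖applyM (NormedSpace.exp
        (∑ i, (∫ s in Set.Ioc (0 : ℝ) t, (if I s = i then (1 : ℝ) else 0)) • A i)) x₀‖ = 0 := by
      intro t
      rw [hx]
      simp [applyM]
    simpa [hz] using tendsto_const_nhds (α := ℝ) (x := (0:ℝ)) (f := atTop)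
  -- main case
  set τ : E → ℝ → ℝ := fun i t => ∫ s in Set.Ioc (0 : ℝ) t, (if I s = i then (1 : ℝ) else 0)
    with hτdef
  set St : ℝ → Matrix (Fin d) (Fin d) ℝ := fun t => ∑ i, τ i t • A i with hStdef
  set Ac : E → Matrix (Fin d) (Fin d) ℂ := fun i => (A i).map (Complex.ofReal : ℝ → ℂ)
    with hAcdef
  set Bc : Matrix (Fin d) (Fin d) ℂ := (∑ i, π i • A i).map (Complex.ofReal : ℝ → ℂ) with hBcdef
  obtain ⟨β, C, hβ, hC, hdec⟩ := hurwitz_decay hd _ hbar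
  set Φ : Matrix (Fin d) (Fin d) ℝ →ₐ[ℝ] Matrix (Fin d) (Fin d) ℂ :=
    Complex.ofRealAm.mapMatrix with hΦdef
  have hΦ : ∀ X : Matrix (Fin d) (Fin d) ℝ, Φ X = X.map (Complex.ofReal : ℝ → ℂ) :=
    fun X => rfl
  have hsmul : ∀ (r : ℝ) (N : Matrix (Fin d) (Fin d) ℂ), r • N = (r : ℂ) • N := by
    intro r N
    rw [← algebraMap_smul ℂ r N, Complex.coe_algebraMap]
  -- R t
  set R : ℝ → Matrix (Fin d) (Fin d) ℂ :=
    fun t => ∑ i, ((τ i t - t * π i : ℝ) : ℂ) • Ac i with hRdef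
  have hΦsum : ∀ t, Φ (St t) = ∑ i, ((τ i t : ℝ) : ℂ) • Ac i := by
    intro t
    rw [hStdef, map_sum]
    refine Finset.sum_congr rfl fun i _ => ?_
    rw [_root_.map_smul, hsmul, hΦ]
  have hBc' : (Bc : Matrix (Fin d) (Fin d) ℂ) = ∑ i, ((π i : ℝ) : ℂ) • Ac i := by
    rw [hBcdef, ← hΦ, map_sum]
    refine Finset.sum_congr rfl fun i _ => ?_
    rw [_root_.map_smul, hsmul, hΦ]
  have hdecomp : ∀ t : ℝ, Φ (St t) = (t : ℂ) • Bc + R t := by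
    intro t
    rw [hΦsum, hBc', hRdef, Finset.smul_sum, ← Finset.sum_add_distrib]
    refine Finset.sum_congr rfl fun i _ => ?_
    rw [smul_smul, ← add_smul]
    congr 1
    push_cast
    ring
  -- commutation
  have hAcomm : ∀ i j, Commute (Ac i) (Ac j) := by
    intro i j
    have h : Commute (A i) (A j) := hcomm i j
    rw [hAcdef]
    exact h.map (Φ : Matrix (Fin d) (Fin d) ℝ →ₐ[ℝ] Matrix (Fin d) (Fin d) ℂ)
  have hcommutes : ∀ t : ℝ, Commute ((t : ℂ) • Bc) (R t) := by
    intro t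
    apply Commute.smul_left
    rw [hBc', hRdef]
    apply Commute.sum_left
    intro i _
    apply Commute.sum_right
    intro j _
    exact ((hAcomm i j).smul_left _).smul_right _
  have hsplit : ∀ t, NormedSpace.exp (Φ (St t)) =
      NormedSpace.exp ((t : ℂ) • Bc) * NormedSpace.exp (R t) := by
    intro t
    rw [hdecomp, Matrix.exp_add_of_commute _ _ (hcommutes t)]
  -- norm of R
  have hAcn : ∀ i, (0:ℝ) ≤ ‖Ac i‖ := fun i => norm_nonneg _
  set δ : ℝ → ℝ := fun t => ∑ i, |(1 / t) * τ i t - π i| * ‖Ac i‖ with hδdef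
  have hδ0 : Tendsto δ atTop (nhds 0) := by
    have h : ∀ i : E, Tendsto (fun t : ℝ => |(1 / t) * τ i t - π i| * ‖Ac i‖) atTop
        (nhds (|π i - π i| * ‖Ac i‖)) := fun i =>
      (((hocc i).sub (tendsto_const_nhds (x := π i))).abs).mul_const _
    have h2 : Tendsto (fun t : ℝ => ∑ i, |(1 / t) * τ i t - π i| * ‖Ac i‖) atTop
        (nhds (∑ i, |π i - π i| * ‖Ac i‖)) :=
      tendsto_finset_sum _ (fun i _ => h i)
    simpa [hδdef] using h2
  have hRnorm : ∀ t : ℝ, 0 < t → ‖R t‖ ≤ t * δ t := by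
    intro t ht
    rw [hRdef]
    refine (norm_sum_le _ _).trans ?_
    rw [Finset.mul_sum]
    refine Finset.sum_le_sum fun i _ => ?_
    rw [norm_smul, Complex.norm_real, Real.norm_eq_abs]
    have habs : |τ i t - t * π i| = t * |(1 / t) * τ i t - π i| := by
      have h1 : τ i t - t * π i = t * ((1 / t) * τ i t - π i) := by field_simp
      rw [h1, abs_mul, abs_of_pos ht]
    rw [habs, mul_assoc]
  -- eventually bound
  have hev1 : ∀ᶠ t : ℝ in atTop, (1:ℝ) ≤ t := eventually_ge_atTop 1
  have hev2 : ∀ᶠ t : ℝ in atTop, δ t ≤ β / 2 :=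
    hδ0.eventually (eventually_le_nhds (by positivity))
  have hone : ‖(1 : Matrix (Fin d) (Fin d) ℂ)‖ ≤ 1 := matrix_norm_one_le
  have hbound : ∀ᶠ t : ℝ in atTop,
      ‖applyM (NormedSpace.exp (St t)) x₀‖ ≤
        (C * ‖x₀‖) * Real.exp (-(β / 2) * t) := by
    filter_upwards [hev1, hev2] with t ht1 htδ
    have ht0 : (0:ℝ) < t := lt_of_lt_of_le one_pos ht1
    have step1 : ‖applyM (NormedSpace.exp (St t)) x₀‖ ≤ ‖NormedSpace.exp (St t)‖ * ‖x₀‖ := by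
      rw [applyM]
      exact (Matrix.toEuclideanCLM (𝕜 := ℝ) (NormedSpace.exp (St t))).le_opNorm x₀
    have step2 : ‖NormedSpace.exp (St t)‖ ≤ ‖NormedSpace.exp (Φ (St t))‖ := by
      refine (real_norm_le_cnorm _).trans ?_
      rw [cmap_exp, hΦ]
    have step3 : ‖NormedSpace.exp (Φ (St t))‖ ≤
        (C * Real.exp (-β * t)) * Real.exp (t * δ t) := by
      rw [hsplit]
      refine (norm_mul_le _ _).trans ?_
      have h1 := hdec t ht0.le
      have h2 : ‖NormedSpace.exp (R t)‖ ≤ Real.exp (t * δ t) := by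
        refine (my_norm_exp_le hone _).trans ?_
        exact Real.exp_le_exp.mpr (hRnorm t ht0)
      exact mul_le_mul h1 h2 (norm_nonneg _) (by positivity)
    have step4 : (C * Real.exp (-β * t)) * Real.exp (t * δ t) ≤
        (C * Real.exp (-β * t)) * Real.exp (t * (β / 2)) := by
      have : t * δ t ≤ t * (β / 2) := mul_le_mul_of_nonneg_left htδ ht0.le
      exact mul_le_mul_of_nonneg_left (Real.exp_le_exp.mpr this) (by positivity)
    have step5 : (C * Real.exp (-β * t)) * Real.exp (t * (β / 2)) =
        C * Real.exp (-(β / 2) * t) := by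
      rw [mul_assoc, ← Real.exp_add]
      congr 2
      ring
    calc ‖applyM (NormedSpace.exp (St t)) x₀‖
        ≤ ‖NormedSpace.exp (St t)‖ * ‖x₀‖ := step1
      _ ≤ ‖NormedSpace.exp (Φ (St t))‖ * ‖x₀‖ :=
          mul_le_mul_of_nonneg_right step2 (norm_nonneg _)
      _ ≤ ((C * Real.exp (-β * t)) * Real.exp (t * δ t)) * ‖x₀‖ :=
          mul_le_mul_of_nonneg_right step3 (norm_nonneg _)
      _ ≤ ((C * Real.exp (-β * t)) * Real.exp (t * (β / 2))) * ‖x₀‖ :=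
          mul_le_mul_of_nonneg_right step4 (norm_nonneg _)
      _ = (C * ‖x₀‖) * Real.exp (-(β / 2) * t) := by rw [step5]; ring
  -- limit of the majorant
  have hmaj : Tendsto (fun t : ℝ => (C * ‖x₀‖) * Real.exp (-(β / 2) * t)) atTop (nhds 0) := by
    have h1 : Tendsto (fun t : ℝ => -(β / 2) * t) atTop atBot := by
      have h0 : Tendsto (fun t : ℝ => (β / 2) * t) atTop atTop :=
        Tendsto.const_mul_atTop (by positivity) tendsto_id
      have h2 := tendsto_neg_atTop_atBot.comp h0
      have heq : (fun t : ℝ => -(β / 2) * t) = (Neg.neg ∘ fun t : ℝ => (β / 2) * t) := by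
        funext t
        exact neg_mul _ _
      rw [heq]
      exact h2
    have h2 := Real.tendsto_exp_atBot.comp h1
    have h3 := h2.const_mul (C * ‖x₀‖)
    simpa using h3
  exact squeeze_zero' (Eventually.of_forall fun t => norm_nonneg _) hbound hmaj
end auxiliary

end
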